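/- For β > 0 let D(β) be the determinant of the 2×2 matrix with first column (∂_β G₁(β,σ), ∂_β G₂(β,σ)) and second column (−σ ∂_σ G₁(β,σ), −σ ∂_σ G₂(β,σ)), where G₁(β,σ) = 𝔠(1/β − 1) + log σ and G₂(β,σ) = π²(1/β² + 1/2)/6 + (𝔠(1/β − 1) + log σ)², with 𝔠 a fixed real constant (Euler's constant). Then D(β) = −π²/(3β³), which is nonzero for every β > 0 and every σ > 0. -/
import Mathlib


theorem stmt_18 (𝔠 : ℝ) (β σ : ℝ) (hβ : 0 < β) (hσ : 0 < σ)
    (G₁ G₂ : ℝ → ℝ → ℝ)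
    (hG₁ : ∀ b s, G₁ b s = 𝔠 * (1/b - 1) + Real.log s)
    (hG₂ : ∀ b s, G₂ b s = Real.pi^2 * (1/b^2 + 1/2) / 6 + (𝔠 * (1/b - 1) + Real.log s)^2) :
    Matrix.det !![deriv (fun b => G₁ b σ) β, -σ * deriv (fun s => G₁ β s) σ;
                  deriv (fun b => G₂ b σ) β, -σ * deriv (fun s => G₂ β s) σ]
      = -Real.pi^2 / (3 * β^3) ∧
    -Real.pi^2 / (3 * β^3) ≠ 0 := by
  have hβ' := hβ.ne'
  have hσ' := hσ.ne'
  constructor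
  · simp only [hG₁, hG₂, one_div]
    have h1 : HasDerivAt (fun b : ℝ => 𝔠 * (b⁻¹ - 1) + Real.log σ)
        (𝔠 * -(β ^ 2)⁻¹) β :=
      (((hasDerivAt_inv hβ').sub_const 1).const_mul 𝔠).add_const _
    have h2 : HasDerivAt (fun s : ℝ => 𝔠 * (β⁻¹ - 1) + Real.log s) σ⁻¹ σ :=
      (Real.hasDerivAt_log hσ').const_add _
    have h3 : HasDerivAt
        (fun b : ℝ => Real.pi ^ 2 * ((b ^ 2)⁻¹ + 2⁻¹) / 6 + (𝔠 * (b⁻¹ - 1) + Real.log σ) ^ 2)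
        (Real.pi ^ 2 * (-((2 : ℕ) * β ^ (2 - 1)) / (β ^ 2) ^ 2) / 6 +
          (2 : ℕ) * (𝔠 * (β⁻¹ - 1) + Real.log σ) ^ (2 - 1) * (𝔠 * -(β ^ 2)⁻¹)) β :=
      (((((hasDerivAt_pow 2 β).inv (pow_ne_zero 2 hβ')).add_const
        2⁻¹).const_mul (Real.pi ^ 2)).div_const 6).add (h1.pow 2)
    have h4 : HasDerivAt
        (fun s : ℝ => Real.pi ^ 2 * ((β ^ 2)⁻¹ + 2⁻¹) / 6 + (𝔠 * (β⁻¹ - 1) + Real.log s) ^ 2)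
        ((2 : ℕ) * (𝔠 * (β⁻¹ - 1) + Real.log σ) ^ (2 - 1) * σ⁻¹) σ :=
      (h2.pow 2).const_add _
    rw [Matrix.det_fin_two_of, h1.deriv, h2.deriv, h3.deriv, h4.deriv]
    field_simp
    ring
  · rw [neg_div, neg_ne_zero]
    positivity
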